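/- Let Γ ↷ (X,μ) be a free, ergodic, measure-preserving action of a countable group, with induced orbit equivalence relation S, and let R ⊆ S be an ergodic subequivalence relation. Suppose ν_n are Borel probability measures on X × X, with both marginals μ, satisfying ∫ f₁(x)f₂(y) dν_n → ∫ f₁f₂ dμ for all bounded Borel f₁,f₂, and ‖(θ×θ)_*ν_n − ν_n‖ → 0 for every θ ∈ [R]. Let w : [R] × X → Γ be the cocycle with θ(x) = w(θ,x)·x, A_γ = {x : w(θ,x) = γ} for a fixed θ ∈ [R], and θ̃(x,y) = (θ(x), w(θ,x)·y). Then liminf_n ν_n(⋃_γ A_γ × A_γ) = 1, and consequently ∫ (f∘θ̃) dν_n − ∫ f dν_n → 0 for every bounded Borel function f on X × X. -/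

import Mathlib

open MeasureTheory Filter Topology

/-- The total variation norm `‖μ - ν‖`. -/
noncomputable def tvDist {X : Type*} [MeasurableSpace X] (μ ν : Measure X) : ℝ :=
  ⨆ f : {f : X → ℝ // Measurable f ∧ ∀ x, |f x| ≤ 1},
    |(∫ x, f.1 x ∂μ) - ∫ x, f.1 x ∂ν|

lemma integrable_of_bdd {α : Type*} [MeasurableSpace α] (μ : Measure α) [IsFiniteMeasure μ]
    {f : α → ℝ} (hf : Measurable f) (C : ℝ) (hC : ∀ x, |f x| ≤ C) : Integrable f μ :=
  Integrable.mono' (integrable_const C) hf.aestronglyMeasurable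
    (Filter.Eventually.of_forall fun x => by simpa [Real.norm_eq_abs] using hC x)

lemma abs_sub_le_tvDist {α : Type*} [MeasurableSpace α] (μ ν : Measure α)
    [IsProbabilityMeasure μ] [IsProbabilityMeasure ν]
    (g : α → ℝ) (hg : Measurable g) (hb : ∀ x, |g x| ≤ 1) :
    |(∫ x, g x ∂μ) - ∫ x, g x ∂ν| ≤ tvDist μ ν := by
  have hbdd : BddAbove (Set.range fun f : {f : α → ℝ // Measurable f ∧ ∀ x, |f x| ≤ 1} =>
      |(∫ x, f.1 x ∂μ) - ∫ x, f.1 x ∂ν|) := by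
    refine ⟨2, ?_⟩
    rintro r ⟨⟨f, hf, hfb⟩, rfl⟩
    have key : ∀ (m : Measure α), IsProbabilityMeasure m → |∫ x, f x ∂m| ≤ 1 := by
      intro m hm
      have hint : Integrable f m := integrable_of_bdd m hf 1 hfb
      calc |∫ x, f x ∂m| ≤ ∫ x, |f x| ∂m := by
            simpa [Real.norm_eq_abs] using norm_integral_le_integral_norm (μ := m) f
        _ ≤ ∫ _x, (1 : ℝ) ∂m := integral_mono hint.abs (integrable_const 1) hfb
        _ = 1 := by simp
    calc |(∫ x, f x ∂μ) - ∫ x, f x ∂ν| ≤ |∫ x, f x ∂μ| + |∫ x, f x ∂ν| := abs_sub _ _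
      _ ≤ 1 + 1 := add_le_add (key μ ‹_›) (key ν ‹_›)
      _ = 2 := by norm_num
  exact le_ciSup hbdd ⟨g, hg, hb⟩

theorem stmt19 {Γ X : Type*} [Group Γ] [Countable Γ]
    [MeasurableSpace X] [StandardBorelSpace X] [MulAction Γ X]
    (hmeasΓ : ∀ γ : Γ, Measurable (fun x : X => γ • x))
    (μ : Measure X) [IsProbabilityMeasure μ]
    (hmp : ∀ γ : Γ, Measure.map (fun x => γ • x) μ = μ)
    (hfree : ∀ (γ : Γ) (x : X), γ • x = x → γ = 1)
    (herg : ∀ A : Set X, MeasurableSet A →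
      (∀ γ : Γ, (fun x => γ • x) ⁻¹' A = A) → μ A = 0 ∨ μ A = 1)
    (R : X → X → Prop) (hReq : Equivalence R)
    (hRsub : ∀ x y, R x y → ∃ γ : Γ, γ • x = y)
    (hRmeas : MeasurableSet {p : X × X | R p.1 p.2})
    (hRerg : ∀ A : Set X, MeasurableSet A →
      (∀ x y, R x y → (x ∈ A ↔ y ∈ A)) → μ A = 0 ∨ μ A = 1)
    (ν : ℕ → Measure (X × X)) (hprob : ∀ n, IsProbabilityMeasure (ν n))
    (h1 : ∀ n, Measure.map Prod.fst (ν n) = μ)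
    (h2 : ∀ n, Measure.map Prod.snd (ν n) = μ)
    (hcorr : ∀ f₁ f₂ : X → ℝ, Measurable f₁ → Measurable f₂ →
      (∃ C, ∀ x, |f₁ x| ≤ C) → (∃ C, ∀ x, |f₂ x| ≤ C) →
      Tendsto (fun n => ∫ p, f₁ p.1 * f₂ p.2 ∂(ν n)) atTop (𝓝 (∫ x, f₁ x * f₂ x ∂μ)))
    (hfg : ∀ θ' : X ≃ X, Measurable θ' → Measurable θ'.symm →
      MeasurePreserving θ' μ μ → (∀ᵐ x ∂μ, R x (θ' x)) →
      Tendsto (fun n =>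
        tvDist (Measure.map (fun p : X × X => (θ' p.1, θ' p.2)) (ν n)) (ν n))
        atTop (𝓝 0))
    (θ : X ≃ X) (hθm : Measurable θ) (hθm' : Measurable θ.symm)
    (hθmp : MeasurePreserving θ μ μ) (hθR : ∀ x, R x (θ x))
    (w : X → Γ) (hw : ∀ x, θ x = w x • x)
    (hwmeas : ∀ γ : Γ, MeasurableSet {x | w x = γ}) :
    atTop.liminf
        (fun n => ((ν n) (⋃ γ : Γ, {x | w x = γ} ×ˢ {x | w x = γ})).toReal) = 1 ∧
    ∀ f : X × X → ℝ, Measurable f → (∃ C, ∀ p, |f p| ≤ C) →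
      Tendsto (fun n => (∫ p, f (θ p.1, w p.1 • p.2) ∂(ν n)) - ∫ p, f p ∂(ν n))
        atTop (𝓝 0) := by
  classical
  have := fun n => hprob n
  set A : Γ → Set X := fun γ => {x | w x = γ} with hAdef
  set D : Set (X × X) := ⋃ γ : Γ, A γ ×ˢ A γ with hDdef
  have hAm : ∀ γ, MeasurableSet (A γ) := hwmeas
  have hDm : MeasurableSet D := MeasurableSet.iUnion fun γ => (hAm γ).prod (hAm γ)
  have hAdisj : Pairwise (Function.onFun Disjoint A) := by
    intro γ γ' hne
    refine Set.disjoint_left.2 fun x hx hx' => hne ?_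
    exact hx.symm.trans hx'
  have hPdisj : Pairwise (Function.onFun Disjoint (fun γ => A γ ×ˢ A γ)) := by
    intro γ γ' hne
    refine Set.disjoint_left.2 fun p hp hp' => ?_
    exact Set.disjoint_left.1 (hAdisj hne) hp.1 hp'.1
  have hAuniv : (⋃ γ : Γ, A γ) = Set.univ := by
    ext x; simp only [Set.mem_iUnion, Set.mem_univ, iff_true]
    exact ⟨w x, rfl⟩
  have htsum : (∑' γ : Γ, μ (A γ)) = 1 := by
    rw [← measure_iUnion hAdisj hAm, hAuniv, measure_univ]
  -- real-valued masses
  have hmsummable : Summable fun γ => (μ (A γ)).toReal :=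
    ENNReal.summable_toReal (by rw [htsum]; exact ENNReal.one_ne_top)
  have hmsum : HasSum (fun γ => (μ (A γ)).toReal) 1 := by
    have := ENNReal.tsum_toReal_eq (f := fun γ => μ (A γ)) (fun γ => measure_ne_top μ _)
    rw [htsum] at this
    simpa [← this] using hmsummable.hasSum
  -- Step: ν n (A γ ×ˢ A γ) → μ (A γ) for each γ
  have hstep1 : ∀ γ : Γ, Tendsto (fun n => ((ν n) (A γ ×ˢ A γ)).toReal) atTop
      (𝓝 ((μ (A γ)).toReal)) := by
    intro γ
    have hind : Measurable ((A γ).indicator (1 : X → ℝ)) :=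
      measurable_one.indicator (hAm γ)
    have hbd : ∃ C, ∀ x, |(A γ).indicator (1 : X → ℝ) x| ≤ C := by
      refine ⟨1, fun x => ?_⟩
      by_cases hx : x ∈ A γ <;> simp [Set.indicator, hx]
    have h := hcorr _ _ hind hind hbd hbd
    have heq1 : (∫ x, (A γ).indicator (1 : X → ℝ) x * (A γ).indicator 1 x ∂μ)
        = (μ (A γ)).toReal := by
      have : (fun x => (A γ).indicator (1 : X → ℝ) x * (A γ).indicator 1 x)
          = (A γ).indicator 1 := by
        funext x; by_cases hx : x ∈ A γ <;> simp [Set.indicator, hx]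
      rw [this, integral_indicator_one (hAm γ)]; rfl
    have heq2 : ∀ n, (∫ p, (A γ).indicator (1 : X → ℝ) p.1 * (A γ).indicator 1 p.2 ∂(ν n))
        = ((ν n) (A γ ×ˢ A γ)).toReal := by
      intro n
      have : (fun p : X × X => (A γ).indicator (1 : X → ℝ) p.1 * (A γ).indicator 1 p.2)
          = (A γ ×ˢ A γ).indicator 1 := by
        funext p
        by_cases h1 : p.1 ∈ A γ <;> by_cases h2 : p.2 ∈ A γ <;>
          simp [Set.indicator, Set.mem_prod, h1, h2]
      rw [this, integral_indicator_one ((hAm γ).prod (hAm γ))]; rfl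
    rw [heq1] at h
    exact h.congr heq2
  have hle1 : ∀ n, ((ν n) D).toReal ≤ 1 := by
    intro n
    have h : (ν n) D ≤ 1 := prob_le_one
    simpa using ENNReal.toReal_mono ENNReal.one_ne_top h
  -- Step 2: ν n D → 1
  have hstep2 : Tendsto (fun n => ((ν n) D).toReal) atTop (𝓝 1) := by
    rw [tendsto_order]
    constructor
    · intro c hc
      obtain ⟨F, hF⟩ := (hmsum.eventually (eventually_gt_nhds hc)).exists
      have hsumF : Tendsto (fun n => ∑ γ ∈ F, ((ν n) (A γ ×ˢ A γ)).toReal) atTop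
          (𝓝 (∑ γ ∈ F, (μ (A γ)).toReal)) :=
        tendsto_finset_sum F fun γ _ => hstep1 γ
      filter_upwards [hsumF.eventually (eventually_gt_nhds hF)] with n hn
      refine lt_of_lt_of_le hn ?_
      have hsum_eq : (∑ γ ∈ F, (ν n) (A γ ×ˢ A γ)) = (ν n) (⋃ γ ∈ F, A γ ×ˢ A γ) :=
        (measure_biUnion_finset (hPdisj.set_pairwise _)
          (fun γ _ => (hAm γ).prod (hAm γ))).symm
      calc (∑ γ ∈ F, ((ν n) (A γ ×ˢ A γ)).toReal)
          = ((∑ γ ∈ F, (ν n) (A γ ×ˢ A γ))).toReal :=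
            (ENNReal.toReal_sum (fun γ _ => measure_ne_top _ _)).symm
        _ = ((ν n) (⋃ γ ∈ F, A γ ×ˢ A γ)).toReal := by rw [hsum_eq]
        _ ≤ ((ν n) D).toReal := by
            apply ENNReal.toReal_mono (measure_ne_top _ _)
            exact measure_mono (Set.iUnion₂_subset fun γ _ => Set.subset_iUnion (fun γ : Γ => A γ ×ˢ A γ) γ)
    · intro c hc
      exact Eventually.of_forall fun n => lt_of_le_of_lt (hle1 n) hc
  refine ⟨hstep2.liminf_eq, ?_⟩
  -- Part 2
  intro f hf hCf
  obtain ⟨C, hC⟩ := hCf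
  set C' : ℝ := max C 1 with hC'def
  have hC'pos : 0 < C' := lt_of_lt_of_le one_pos (le_max_right C 1)
  have hC' : ∀ p, |f p| ≤ C' := fun p => (hC p).trans (le_max_left C 1)
  -- measurability of θ̃ and θ × θ
  have hθθ : Measurable (fun p : X × X => (θ p.1, θ p.2)) :=
    (hθm.comp measurable_fst).prodMk (hθm.comp measurable_snd)
  have hsnd : Measurable (fun p : X × X => w p.1 • p.2) := by
    intro B hB
    have hpre : (fun p : X × X => w p.1 • p.2) ⁻¹' B
        = ⋃ γ : Γ, A γ ×ˢ ((fun y => γ • y) ⁻¹' B) := by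
      ext ⟨x, y⟩
      simp only [Set.mem_preimage, Set.mem_iUnion, Set.mem_prod]
      exact ⟨fun h => ⟨w x, rfl, h⟩, fun ⟨γ, h1, h2⟩ => by rw [show w x = γ from h1]; exact h2⟩
    rw [hpre]
    exact MeasurableSet.iUnion fun γ => (hAm γ).prod (hmeasΓ γ hB)
  have htil : Measurable (fun p : X × X => (θ p.1, w p.1 • p.2)) :=
    (hθm.comp measurable_fst).prodMk hsnd
  -- ν n Dᶜ → 0
  have hcompl : ∀ n, ((ν n) Dᶜ).toReal = 1 - ((ν n) D).toReal := by
    intro n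
    haveI := hprob n
    rw [measure_compl hDm (measure_ne_top _ _), measure_univ,
      ENNReal.toReal_sub_of_le prob_le_one ENNReal.one_ne_top, ENNReal.toReal_one]
  have hDc0 : Tendsto (fun n => ((ν n) Dᶜ).toReal) atTop (𝓝 0) := by
    have := tendsto_const_nhds (x := (1 : ℝ)) (f := atTop (α := ℕ)) |>.sub hstep2
    simp only [sub_self] at this
    exact this.congr fun n => (hcompl n).symm
  -- tvDist term → 0
  have htv := hfg θ hθm hθm' hθmp (Filter.Eventually.of_forall hθR)
  -- the bound sequence
  set g : ℕ → ℝ := fun n => 2 * C' * ((ν n) Dᶜ).toReal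
    + C' * tvDist (Measure.map (fun p : X × X => (θ p.1, θ p.2)) (ν n)) (ν n) with hgdef
  have hg0 : Tendsto g atTop (𝓝 0) := by
    have h1' := hDc0.const_mul (2 * C')
    have h2' := htv.const_mul C'
    have := h1'.add h2'
    simpa using this
  refine squeeze_zero_norm ?_ hg0
  intro n
  haveI := hprob n
  haveI : IsProbabilityMeasure (Measure.map (fun p : X × X => (θ p.1, θ p.2)) (ν n)) :=
    Measure.isProbabilityMeasure_map hθθ.aemeasurable
  -- integrability
  have int1 : Integrable (fun p : X × X => f (θ p.1, w p.1 • p.2)) (ν n) :=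
    integrable_of_bdd _ (hf.comp htil) C' fun p => hC' _
  have int3 : Integrable (fun p : X × X => f (θ p.1, θ p.2)) (ν n) :=
    integrable_of_bdd _ (hf.comp hθθ) C' fun p => hC' _
  have int2 : Integrable f (ν n) := integrable_of_bdd _ hf C' hC'
  -- bound A : difference between θ̃ and θ × θ integrals
  have boundA : |(∫ p, f (θ p.1, w p.1 • p.2) ∂(ν n)) - ∫ p, f (θ p.1, θ p.2) ∂(ν n)|
      ≤ 2 * C' * ((ν n) Dᶜ).toReal := by
    rw [← integral_sub int1 int3]
    have hptw : ∀ p : X × X,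
        ‖f (θ p.1, w p.1 • p.2) - f (θ p.1, θ p.2)‖
          ≤ Dᶜ.indicator (fun _ => 2 * C') p := by
      intro p
      by_cases hp : p ∈ D
      · have : w p.1 • p.2 = θ p.2 := by
          obtain ⟨γ, h1, h2⟩ : ∃ γ, p.1 ∈ A γ ∧ p.2 ∈ A γ := by
            simpa only [hDdef, Set.mem_iUnion, Set.mem_prod] using hp
          rw [hw p.2]
          have : w p.1 = w p.2 := h1.trans h2.symm
          rw [this]
        simp [this, Set.indicator_of_notMem (by simpa using hp : p ∉ Dᶜ)]
      · rw [Set.indicator_of_mem (by simpa using hp : p ∈ Dᶜ)]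
        calc ‖f (θ p.1, w p.1 • p.2) - f (θ p.1, θ p.2)‖
            ≤ |f (θ p.1, w p.1 • p.2)| + |f (θ p.1, θ p.2)| := by
              simpa [Real.norm_eq_abs] using abs_sub _ _
          _ ≤ C' + C' := add_le_add (hC' _) (hC' _)
          _ = 2 * C' := by ring
    calc |∫ p, (f (θ p.1, w p.1 • p.2) - f (θ p.1, θ p.2)) ∂(ν n)|
        ≤ ∫ p, ‖f (θ p.1, w p.1 • p.2) - f (θ p.1, θ p.2)‖ ∂(ν n) := by
          simpa [Real.norm_eq_abs] using
            norm_integral_le_integral_norm (μ := ν n)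
              (fun p : X × X => f (θ p.1, w p.1 • p.2) - f (θ p.1, θ p.2))
      _ ≤ ∫ p, Dᶜ.indicator (fun _ => 2 * C') p ∂(ν n) := by
          refine integral_mono (int1.sub int3).norm ?_ hptw
          exact (integrable_const (2 * C')).indicator hDm.compl
      _ = 2 * C' * ((ν n) Dᶜ).toReal := by
          rw [integral_indicator_const _ hDm.compl]
          simp [mul_comm, smul_eq_mul, Measure.real]
  -- bound B : tvDist bound
  have boundB : |(∫ p, f (θ p.1, θ p.2) ∂(ν n)) - ∫ p, f p ∂(ν n)|
      ≤ C' * tvDist (Measure.map (fun p : X × X => (θ p.1, θ p.2)) (ν n)) (ν n) := by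
    set g' : X × X → ℝ := fun p => f p / C' with hg'def
    have hg'm : Measurable g' := hf.div_const C'
    have hg'b : ∀ p, |g' p| ≤ 1 := by
      intro p
      rw [hg'def]
      simp only [abs_div, abs_of_pos hC'pos]
      rw [div_le_one hC'pos]
      exact hC' p
    have key := abs_sub_le_tvDist (Measure.map (fun p : X × X => (θ p.1, θ p.2)) (ν n))
      (ν n) g' hg'm hg'b
    have hmapint : (∫ p, g' p ∂(Measure.map (fun p : X × X => (θ p.1, θ p.2)) (ν n)))
        = ∫ p, g' (θ p.1, θ p.2) ∂(ν n) :=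
      integral_map hθθ.aemeasurable hg'm.aestronglyMeasurable
    rw [hmapint] at key
    have e1 : (∫ p, g' (θ p.1, θ p.2) ∂(ν n)) = (∫ p, f (θ p.1, θ p.2) ∂(ν n)) / C' := by
      rw [hg'def]; exact integral_div C' _
    have e2 : (∫ p, g' p ∂(ν n)) = (∫ p, f p ∂(ν n)) / C' := by
      rw [hg'def]; exact integral_div C' _
    rw [e1, e2, div_sub_div_same, abs_div, abs_of_pos hC'pos, div_le_iff₀ hC'pos] at key
    linarith [key]
  calc ‖(∫ p, f (θ p.1, w p.1 • p.2) ∂(ν n)) - ∫ p, f p ∂(ν n)‖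
      = |((∫ p, f (θ p.1, w p.1 • p.2) ∂(ν n)) - ∫ p, f (θ p.1, θ p.2) ∂(ν n))
          + ((∫ p, f (θ p.1, θ p.2) ∂(ν n)) - ∫ p, f p ∂(ν n))| := by
        rw [Real.norm_eq_abs]; ring_nf
    _ ≤ |(∫ p, f (θ p.1, w p.1 • p.2) ∂(ν n)) - ∫ p, f (θ p.1, θ p.2) ∂(ν n)|
          + |(∫ p, f (θ p.1, θ p.2) ∂(ν n)) - ∫ p, f p ∂(ν n)| := abs_add_le _ _
    _ ≤ g n := add_le_add boundA boundB
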